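/- For any y ∈ ℝ^n, F ∈ ℝ^{n×p}, and λ ≥ 0, the minimum of ||y - Fθ||_2^2 + λ·ℓ0(θ) over θ ∈ ℝ^p equals the minimum over w ∈ ℝ^p and γ ∈ [0,1]^p of ||y - F(w⊙γ)||_2^2 + Σ_{i,j} F_{ij}^2 w_j^2 γ_j(1-γ_j) + λ Σ_j γ_j, where w⊙γ denotes componentwise multiplication. -/

import Mathlib

open Finset

/-- number of nonzero components of a vector, as a real number. -/
noncomputable def l0 {p : ℕ} (θ : Fin p → ℝ) : ℝ :=
  ∑ j, if θ j = 0 then 0 else 1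

/-- the relaxed objective -/
noncomputable def obj {n p : ℕ} (y : Fin n → ℝ) (F : Matrix (Fin n) (Fin p) ℝ)
    (lam : ℝ) (w γ : Fin p → ℝ) : ℝ :=
  (∑ i, (y i - ∑ j, F i j * (w j * γ j)) ^ 2)
    + (∑ i, ∑ j, (F i j) ^ 2 * (w j) ^ 2 * γ j * (1 - γ j))
    + lam * ∑ j, γ j

lemma sum_update_split {p : ℕ} (f : Fin p → ℝ → ℝ) (γ : Fin p → ℝ) (j : Fin p) (t : ℝ) :
    ∑ k, f k (Function.update γ j t k)
      = f j t + ∑ k ∈ Finset.univ.erase j, f k (γ k) := by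
  rw [← Finset.add_sum_erase _ _ (Finset.mem_univ j), Function.update_self]
  congr 1
  exact Finset.sum_congr rfl fun k hk => by
    rw [Function.update_of_ne (Finset.ne_of_mem_erase hk)]

lemma obj_affine {n p : ℕ} (y : Fin n → ℝ) (F : Matrix (Fin n) (Fin p) ℝ)
    (lam : ℝ) (w γ : Fin p → ℝ) (j : Fin p) (t : ℝ) :
    obj y F lam w (Function.update γ j t)
      = (1 - t) * obj y F lam w (Function.update γ j 0)
        + t * obj y F lam w (Function.update γ j 1) := by
  set a : Fin n → ℝ := fun i => F i j * w j with ha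
  set c : Fin n → ℝ := fun i => ∑ k ∈ Finset.univ.erase j, F i k * (w k * γ k) with hc
  set d : Fin n → ℝ := fun i =>
    ∑ k ∈ Finset.univ.erase j, (F i k) ^ 2 * (w k) ^ 2 * γ k * (1 - γ k) with hd
  set e : ℝ := ∑ k ∈ Finset.univ.erase j, γ k with he
  have key : ∀ s : ℝ, obj y F lam w (Function.update γ j s)
      = ∑ i, ((y i - (a i * s + c i)) ^ 2 + (a i) ^ 2 * s * (1 - s)) + (∑ i, d i)
        + lam * (s + e) := by
    intro s
    unfold obj
    have e1 : ∀ i, (∑ k, F i k * (w k * Function.update γ j s k)) = a i * s + c i := by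
      intro i
      rw [sum_update_split (fun k x => F i k * (w k * x)) γ j s]
      simp only [ha, hc]
      ring
    have e2 : ∀ i, (∑ k, (F i k) ^ 2 * (w k) ^ 2 * Function.update γ j s k
        * (1 - Function.update γ j s k)) = (a i) ^ 2 * s * (1 - s) + d i := by
      intro i
      rw [sum_update_split (fun k x => (F i k) ^ 2 * (w k) ^ 2 * x * (1 - x)) γ j s]
      simp only [ha, hd]
      ring
    have e3 : (∑ k, Function.update γ j s k) = s + e := by
      rw [sum_update_split (fun _ x => x) γ j s]
    simp only [e1, e2, e3, Finset.sum_add_distrib]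
    ring
  rw [key t, key 0, key 1]
  have hsum : ∑ i, ((y i - (a i * t + c i)) ^ 2 + (a i) ^ 2 * t * (1 - t))
      = ∑ i, ((1 - t) * ((y i - (a i * 0 + c i)) ^ 2 + (a i) ^ 2 * 0 * (1 - 0))
          + t * ((y i - (a i * 1 + c i)) ^ 2 + (a i) ^ 2 * 1 * (1 - 1))) := by
    apply Finset.sum_congr rfl
    intro i _
    ring
  rw [hsum, Finset.sum_add_distrib, ← Finset.mul_sum, ← Finset.mul_sum]
  ring

lemma exists_bool {n p : ℕ} (y : Fin n → ℝ) (F : Matrix (Fin n) (Fin p) ℝ)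
    (lam : ℝ) (w : Fin p → ℝ) (s : Finset (Fin p)) :
    ∀ γ : Fin p → ℝ, (∀ j, γ j ∈ Set.Icc (0:ℝ) 1) →
      (∀ j ∉ s, γ j = 0 ∨ γ j = 1) →
      ∃ γ' : Fin p → ℝ, (∀ j, γ' j = 0 ∨ γ' j = 1) ∧
        obj y F lam w γ' ≤ obj y F lam w γ := by
  classical
  induction s using Finset.induction with
  | empty =>
    intro γ _ hb
    exact ⟨γ, fun j => hb j (Finset.notMem_empty j), le_refl _⟩
  | insert a s hns ih =>
    intro γ hIcc hb
    have haff := obj_affine y F lam w γ a (γ a)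
    rw [Function.update_eq_self] at haff
    have h0 : (0:ℝ) ≤ γ a := (hIcc a).1
    have h1 : γ a ≤ 1 := (hIcc a).2
    have hmin : min (obj y F lam w (Function.update γ a 0))
        (obj y F lam w (Function.update γ a 1)) ≤ obj y F lam w γ := by
      rcases le_total (obj y F lam w (Function.update γ a 0))
          (obj y F lam w (Function.update γ a 1)) with h | h
      · rw [min_eq_left h]; nlinarith
      · rw [min_eq_right h]; nlinarith
    rcases le_total (obj y F lam w (Function.update γ a 0))
        (obj y F lam w (Function.update γ a 1)) with h | h
    · -- use update 0
      obtain ⟨γ', hγ', hle⟩ := ih (Function.update γ a 0)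
        (fun j => by
          rcases eq_or_ne j a with rfl | hj
          · simp [Function.update_self]
          · rw [Function.update_of_ne hj]; exact hIcc j)
        (fun j hj => by
          rcases eq_or_ne j a with rfl | hja
          · left; simp
          · rw [Function.update_of_ne hja]
            exact hb j (by simp [hja, hj]))
      refine ⟨γ', hγ', hle.trans ?_⟩
      rw [min_eq_left h] at hmin; exact hmin
    · obtain ⟨γ', hγ', hle⟩ := ih (Function.update γ a 1)
        (fun j => by
          rcases eq_or_ne j a with rfl | hj
          · simp [Function.update_self]
          · rw [Function.update_of_ne hj]; exact hIcc j)
        (fun j hj => by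
          rcases eq_or_ne j a with rfl | hja
          · right; simp
          · rw [Function.update_of_ne hja]
            exact hb j (by simp [hja, hj]))
      refine ⟨γ', hγ', hle.trans ?_⟩
      rw [min_eq_right h] at hmin; exact hmin

/-- Corollary 2 of the paper: the minimum of the ℓ0-regularized
least squares objective equals the minimum of its exact probabilistic
reformulation. -/
theorem stmt_5 {n p : ℕ} (y : Fin n → ℝ) (F : Matrix (Fin n) (Fin p) ℝ)
    (lam : ℝ) (hlam : 0 ≤ lam) :
    sInf {v : ℝ | ∃ θ : Fin p → ℝ,
        v = (∑ i, (y i - ∑ j, F i j * θ j) ^ 2) + lam * l0 θ}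
    = sInf {v : ℝ | ∃ w γ : Fin p → ℝ, (∀ j, γ j ∈ Set.Icc (0:ℝ) 1) ∧
        v = (∑ i, (y i - ∑ j, F i j * (w j * γ j)) ^ 2)
          + (∑ i, ∑ j, (F i j) ^ 2 * (w j) ^ 2 * γ j * (1 - γ j))
          + lam * ∑ j, γ j} := by
  classical
  set L := {v : ℝ | ∃ θ : Fin p → ℝ,
      v = (∑ i, (y i - ∑ j, F i j * θ j) ^ 2) + lam * l0 θ} with hL
  set R := {v : ℝ | ∃ w γ : Fin p → ℝ, (∀ j, γ j ∈ Set.Icc (0:ℝ) 1) ∧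
      v = (∑ i, (y i - ∑ j, F i j * (w j * γ j)) ^ 2)
        + (∑ i, ∑ j, (F i j) ^ 2 * (w j) ^ 2 * γ j * (1 - γ j))
        + lam * ∑ j, γ j} with hR
  have hLbdd : BddBelow L := by
    refine ⟨0, fun v hv => ?_⟩
    obtain ⟨θ, rfl⟩ := hv
    have h1 : (0:ℝ) ≤ ∑ i, (y i - ∑ j, F i j * θ j) ^ 2 :=
      Finset.sum_nonneg fun i _ => sq_nonneg _
    have h2 : (0:ℝ) ≤ l0 θ := Finset.sum_nonneg fun j _ => by
      split <;> norm_num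
    positivity
  have hRbdd : BddBelow R := by
    refine ⟨0, fun v hv => ?_⟩
    obtain ⟨w, γ, hIcc, rfl⟩ := hv
    have h1 : (0:ℝ) ≤ ∑ i, (y i - ∑ j, F i j * (w j * γ j)) ^ 2 :=
      Finset.sum_nonneg fun i _ => sq_nonneg _
    have h2 : (0:ℝ) ≤ ∑ i, ∑ j, (F i j) ^ 2 * (w j) ^ 2 * γ j * (1 - γ j) :=
      Finset.sum_nonneg fun i _ => Finset.sum_nonneg fun j _ =>
        mul_nonneg (mul_nonneg (mul_nonneg (sq_nonneg _) (sq_nonneg _)) (hIcc j).1)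
          (by linarith [(hIcc j).2])
    have h3 : (0:ℝ) ≤ ∑ j, γ j := Finset.sum_nonneg fun j _ => (hIcc j).1
    have h4 : (0:ℝ) ≤ lam * ∑ j, γ j := mul_nonneg hlam h3
    linarith
  have hLne : L.Nonempty := ⟨_, ⟨0, rfl⟩⟩
  have hRne : R.Nonempty := by
    refine ⟨_, ⟨0, 0, fun j => ?_, rfl⟩⟩
    constructor <;> norm_num
  apply le_antisymm
  · -- sInf L ≤ sInf R
    apply le_csInf hRne
    rintro v ⟨w, γ, hIcc, rfl⟩
    obtain ⟨γ', hbool, hle⟩ := exists_bool y F lam w Finset.univ γ hIcc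
      (fun j hj => absurd (Finset.mem_univ j) hj)
    set θ : Fin p → ℝ := fun j => w j * γ' j with hθ
    have hval : (∑ i, (y i - ∑ j, F i j * θ j) ^ 2) + lam * l0 θ
        ≤ obj y F lam w γ' := by
      unfold obj
      have hcorr : (∑ i, ∑ j, (F i j) ^ 2 * (w j) ^ 2 * γ' j * (1 - γ' j)) = 0 := by
        apply Finset.sum_eq_zero; intro i _
        apply Finset.sum_eq_zero; intro j _
        rcases hbool j with h | h <;> rw [h] <;> ring
      rw [hcorr, add_zero]
      have hl0 : l0 θ ≤ ∑ j, γ' j := by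
        unfold l0
        apply Finset.sum_le_sum
        intro j _
        rcases hbool j with h | h
        · have : θ j = 0 := by simp [hθ, h]
          simp [this, h]
        · rw [h]; split <;> norm_num
      have : lam * l0 θ ≤ lam * ∑ j, γ' j := mul_le_mul_of_nonneg_left hl0 hlam
      simp only [hθ]
      linarith
    have hmem : (∑ i, (y i - ∑ j, F i j * θ j) ^ 2) + lam * l0 θ ∈ L := ⟨θ, rfl⟩
    calc sInf L ≤ (∑ i, (y i - ∑ j, F i j * θ j) ^ 2) + lam * l0 θ :=
          csInf_le hLbdd hmem
      _ ≤ obj y F lam w γ' := hval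
      _ ≤ obj y F lam w γ := hle
      _ = _ := rfl
  · -- sInf R ≤ sInf L
    apply le_csInf hLne
    rintro v ⟨θ, rfl⟩
    set γ : Fin p → ℝ := fun j => if θ j = 0 then 0 else 1 with hγ
    have hIcc : ∀ j, γ j ∈ Set.Icc (0:ℝ) 1 := fun j => by
      simp only [hγ]; split <;> constructor <;> norm_num
    have hmem : (∑ i, (y i - ∑ j, F i j * θ j) ^ 2) + lam * l0 θ ∈ R := by
      refine ⟨θ, γ, hIcc, ?_⟩
      have h1 : ∀ j, θ j * γ j = θ j := by
        intro j
        simp only [hγ]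
        split
        · rename_i h; rw [h]; ring
        · ring
      have hcorr : (∑ i, ∑ j, (F i j) ^ 2 * (θ j) ^ 2 * γ j * (1 - γ j)) = 0 := by
        apply Finset.sum_eq_zero; intro i _
        apply Finset.sum_eq_zero; intro j _
        simp only [hγ]
        split <;> ring
      have hsum : ∑ j, γ j = l0 θ := by
        unfold l0
        apply Finset.sum_congr rfl
        intro j _
        simp only [hγ]
      simp only [h1, hcorr, hsum, add_zero]
    exact csInf_le hRbdd hmem
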